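/- Let v, x_k, v_k ∈ H with x_k a nearest point to v_k in F(p_k) and suppose the KKT-type identity (x_k − v_k)/‖x_k − v_k‖ + Σ_i λ_i^k ∇_x h_i(p_k, x_k) = 0 holds with λ_i^k ≥ 0 and λ_i^k h_i(p_k, x_k) = 0 for i ∈ I, and Σ_i |λ_i^k| ≤ M. If each h_i(p_k, ·) is differentiable at x_k with derivative ∇_x h_i(p_k, x_k), then for k large enough (so that the first-order remainders satisfy Σ λ_i^k o(‖v_k − x_k‖) ≤ ½‖v_k − x_k‖) one has dist(v_k, F(p_k)) = ‖x_k − v_k‖ ≤ 2M·max{0, h_i(p_k, v_k), i ∈ I, |h_i(p_k, v_k)|, i ∈ I0}. -/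

import Mathlib

/-- The key inequality estimate in the proof of the criterion of R-regularity: pairing the KKT
identity at a metric projection `x` of `v` with `v − x`, using complementary slackness and the
first-order Taylor remainder bound, yields
`dist(v, F) = ‖x − v‖ ≤ 2M·max{0, h_i(v), i ∈ I, |h_i(v)|, i ∈ I0}`. -/
theorem stmt7 {H ι : Type*} [NormedAddCommGroup H] [InnerProductSpace ℝ H] [CompleteSpace H]
    [Fintype ι] [DecidableEq ι]
    (h : ι → H → ℝ) (g : ι → H) (I I0 : Finset ι) (F : Set H)
    (hF : F = {y | (∀ i ∈ I, h i y ≤ 0) ∧ ∀ i ∈ I0, h i y = 0})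
    (x v : H) (hxF : x ∈ F) (hvF : v ∉ F)
    (hproj : ‖x - v‖ = Metric.infDist v F)
    (M : ℝ) (lam : ι → ℝ)
    (hgrad : ∀ i ∈ I ∪ I0, HasGradientAt (h i) (g i) x)
    (hkkt : ‖x - v‖⁻¹ • (x - v) + ∑ i ∈ I ∪ I0, lam i • g i = 0)
    (hcs : ∀ i ∈ I, 0 ≤ lam i ∧ lam i * h i x = 0)
    (hbd : ∑ i ∈ I ∪ I0, |lam i| ≤ M)
    -- the first-order remainders are small: `Σ λ_i · o(‖v − x‖) ≤ ½‖v − x‖`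
    (hrem : ∑ i ∈ I ∪ I0, lam i * ((inner ℝ (g i) (v - x) : ℝ) - (h i v - h i x))
      ≤ (1/2) * ‖v - x‖) :
    Metric.infDist v F = ‖x - v‖ ∧
      ‖x - v‖ ≤ 2 * M * sSup (insert (0:ℝ)
        ((fun i => h i v) '' ↑I ∪ (fun i => |h i v|) '' ↑I0)) := by
  refine ⟨hproj.symm, ?_⟩
  set S : Set ℝ := insert (0:ℝ) ((fun i => h i v) '' ↑I ∪ (fun i => |h i v|) '' ↑I0) with hS
  have hSfin : S.Finite := by
    apply Set.Finite.insert
    exact ((I.finite_toSet.image _).union (I0.finite_toSet.image _))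
  have hbdd : BddAbove S := hSfin.bddAbove
  have hS0 : 0 ≤ sSup S := le_csSup hbdd (Set.mem_insert _ _)
  have hne : x ≠ v := by rintro rfl; exact hvF hxF
  have hnpos : 0 < ‖x - v‖ := by
    rw [norm_pos_iff]; exact sub_ne_zero_of_ne hne
  -- pair KKT with v - x
  have h1 : (inner ℝ (‖x - v‖⁻¹ • (x - v) + ∑ i ∈ I ∪ I0, lam i • g i) (v - x) : ℝ) = 0 := by
    rw [hkkt, inner_zero_left]
  have h2 : ∑ i ∈ I ∪ I0, lam i * (inner ℝ (g i) (v - x) : ℝ) = ‖x - v‖ := by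
    rw [inner_add_left, sum_inner, real_inner_smul_left] at h1
    have hxv : (inner ℝ (x - v) (v - x) : ℝ) = -(‖x - v‖^2) := by
      rw [show v - x = -(x - v) from (neg_sub x v).symm, inner_neg_right, real_inner_self_eq_norm_sq]
    rw [hxv] at h1
    have : ‖x - v‖⁻¹ * -(‖x - v‖ ^ 2) = -‖x - v‖ := by
      field_simp
    rw [this] at h1
    have := h1
    simp only [real_inner_smul_left] at this
    linarith [this]
  -- per-term bound
  have hterm : ∀ i ∈ I ∪ I0, lam i * (h i v - h i x) ≤ |lam i| * sSup S := by
    intro i hi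
    rcases Finset.mem_union.mp hi with hiI | hiI0
    · obtain ⟨hl0, hls⟩ := hcs i hiI
      have : lam i * (h i v - h i x) = lam i * h i v := by ring_nf; linarith [hls]
      rw [this, abs_of_nonneg hl0]
      have hmem : h i v ∈ S := by
        exact Set.mem_insert_iff.mpr (Or.inr (Or.inl ⟨i, hiI, rfl⟩))
      exact mul_le_mul_of_nonneg_left (le_csSup hbdd hmem) hl0
    · have hx0 : h i x = 0 := by
        rw [hF] at hxF; exact hxF.2 i hiI0
      rw [hx0, sub_zero]
      have hmem : |h i v| ∈ S := Set.mem_insert_iff.mpr (Or.inr (Or.inr ⟨i, hiI0, rfl⟩))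
      calc lam i * h i v ≤ |lam i * h i v| := le_abs_self _
        _ = |lam i| * |h i v| := abs_mul _ _
        _ ≤ |lam i| * sSup S := mul_le_mul_of_nonneg_left (le_csSup hbdd hmem) (abs_nonneg _)
  have h3 : ∑ i ∈ I ∪ I0, lam i * (h i v - h i x) ≤ M * sSup S := by
    calc ∑ i ∈ I ∪ I0, lam i * (h i v - h i x)
        ≤ ∑ i ∈ I ∪ I0, |lam i| * sSup S := Finset.sum_le_sum hterm
      _ = (∑ i ∈ I ∪ I0, |lam i|) * sSup S := by rw [Finset.sum_mul]
      _ ≤ M * sSup S := mul_le_mul_of_nonneg_right hbd hS0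
  have hsplit : ∑ i ∈ I ∪ I0, lam i * (inner ℝ (g i) (v - x) : ℝ)
      = ∑ i ∈ I ∪ I0, lam i * (h i v - h i x)
        + ∑ i ∈ I ∪ I0, lam i * ((inner ℝ (g i) (v - x) : ℝ) - (h i v - h i x)) := by
    rw [← Finset.sum_add_distrib]; congr 1; ext i; ring
  have hvx : ‖v - x‖ = ‖x - v‖ := norm_sub_rev _ _
  rw [hvx] at hrem
  have : ‖x - v‖ ≤ M * sSup S + (1/2) * ‖x - v‖ := by
    rw [← h2, hsplit]; linarith
  linarith
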